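/- Assume Σ, Ψ : [x₀,∞) → (0,∞) are continuous with cu ≤ Ψ(u) and Σ(u) ≤ Cu² for all u ≥ x₀, where 0 < c, C < ∞. With Q, φ as before (Q(u) = ∫_{x₀}^u Ψ/Σ, φ(u) = ∫_u^∞ e^{−Q}/Σ, assumed finite, Q nondecreasing to ∞), one has, for all x ≥ x₀: (1 + C/c) ∫_{x₀}^x φ(u)e^{Q(u)} du ≥ ∫_{x₀}^x du/Ψ(u) − (C/c)·φ(x₀)·x₀. Consequently, if ∫_{x₀}^∞ φ(u)e^{Q(u)} du < ∞ then ∫_{x₀}^∞ du/Ψ(u) < ∞. -/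

import Mathlib

open Set MeasureTheory Filter Topology

lemma primitive_contOn_Ici (f : ℝ → ℝ) (a : ℝ)
    (h : ∀ b ≥ a, IntegrableOn f (Ioc a b) volume) :
    ContinuousOn (fun x => ∫ t in a..x, f t) (Ici a) := by
  intro u hu
  have hIcc : IntegrableOn f (Icc a (u + 1)) volume := by
    rw [integrableOn_Icc_iff_integrableOn_Ioc]
    exact h (u + 1) (le_trans hu (by linarith))
  have h1 : ContinuousOn (fun x => ∫ t in Ioc a x, f t) (Icc a (u + 1)) :=
    intervalIntegral.continuousOn_primitive hIcc
  have hmem : Icc a (u + 1) ∈ 𝓝[Ici a] u := by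
    rw [← Ici_inter_Iic]
    exact Filter.inter_mem self_mem_nhdsWithin
      (mem_nhdsWithin_of_mem_nhds (Iic_mem_nhds (by linarith)))
  have h2 : ContinuousWithinAt (fun x => ∫ t in Ioc a x, f t) (Ici a) u :=
    (h1 u ⟨hu, by linarith⟩).mono_of_mem_nhdsWithin hmem
  refine h2.congr (fun x hx => ?_) ?_
  · rw [intervalIntegral.integral_of_le hx]
  · rw [intervalIntegral.integral_of_le hu]


/-- `Q(u) := ∫_{x₀}^u Ψ/Σ` -/
noncomputable def Qf (Sig Psi : ℝ → ℝ) (x₀ u : ℝ) : ℝ := ∫ v in x₀..u, Psi v / Sig v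

/-- `φ(u) := ∫_u^∞ (1/Σ(x)) e^{−Q(x)} dx` -/
noncomputable def phif (Sig Psi : ℝ → ℝ) (x₀ u : ℝ) : ℝ :=
  ∫ x in Set.Ioi u, (1 / Sig x) * Real.exp (-(Qf Sig Psi x₀ x))

/-- Under `c u ≤ Ψ(u)` and `Σ(u) ≤ C u²`,
`(1 + C/c) ∫_{x₀}^x φ e^{Q} ≥ ∫_{x₀}^x du/Ψ(u) − (C/c) φ(x₀) x₀`; hence
`∫_{x₀}^∞ φ e^{Q} < ∞` implies Grey's condition `∫_{x₀}^∞ du/Ψ(u) < ∞`. -/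
theorem stmt8 (Sig Psi : ℝ → ℝ) (x₀ c C : ℝ) (hx₀ : 0 < x₀) (hc : 0 < c) (hC : 0 < C)
    (hScont : ContinuousOn Sig (Ici x₀)) (hPcont : ContinuousOn Psi (Ici x₀))
    (hSpos : ∀ x ≥ x₀, 0 < Sig x) (hPpos : ∀ x ≥ x₀, 0 < Psi x)
    (hPmono : MonotoneOn Psi (Ici x₀))
    (hlow : ∀ u ≥ x₀, c * u ≤ Psi u) (hupp : ∀ u ≥ x₀, Sig u ≤ C * u^2)
    (hQmono : MonotoneOn (fun u => Qf Sig Psi x₀ u) (Ici x₀))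
    (hQ : Tendsto (fun u => Qf Sig Psi x₀ u) atTop atTop)
    (hφ : IntegrableOn (fun x => (1 / Sig x) * Real.exp (-(Qf Sig Psi x₀ x))) (Ioi x₀)) :
    (∀ x ≥ x₀,
      (1 + C/c) * ∫ u in x₀..x, phif Sig Psi x₀ u * Real.exp (Qf Sig Psi x₀ u)
        ≥ (∫ u in x₀..x, 1 / Psi u) - (C/c) * phif Sig Psi x₀ x₀ * x₀) ∧
    (IntegrableOn (fun u => phif Sig Psi x₀ u * Real.exp (Qf Sig Psi x₀ u)) (Ioi x₀) →
      IntegrableOn (fun u => 1 / Psi u) (Ioi x₀)) := by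
  set f : ℝ → ℝ := fun x => (1 / Sig x) * Real.exp (-(Qf Sig Psi x₀ x)) with hf_def
  set g : ℝ → ℝ := fun u => Real.exp (Qf Sig Psi x₀ u) * phif Sig Psi x₀ u with hg_def
  have hSne : ∀ x ≥ x₀, Sig x ≠ 0 := fun x hx => (hSpos x hx).ne'
  have hPne : ∀ x ≥ x₀, Psi x ≠ 0 := fun x hx => (hPpos x hx).ne'
  -- continuity of Ψ/Σ
  have hPS_cont : ContinuousOn (fun v => Psi v / Sig v) (Ici x₀) :=
    hPcont.div hScont hSne
  have hPS_int : ∀ a b, x₀ ≤ a → x₀ ≤ b →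
      IntervalIntegrable (fun v => Psi v / Sig v) volume a b := by
    intro a b ha hb
    apply ContinuousOn.intervalIntegrable
    exact hPS_cont.mono (fun x hx => le_trans (le_min ha hb) hx.1)
  -- Q continuity
  have hQcont : ContinuousOn (fun u => Qf Sig Psi x₀ u) (Ici x₀) := by
    apply primitive_contOn_Ici
    intro b hb
    exact (intervalIntegrable_iff_integrableOn_Ioc_of_le hb).1 (hPS_int x₀ b le_rfl hb)
  -- Q derivative
  have hQderiv : ∀ u ∈ Ioi x₀, HasDerivAt (fun u => Qf Sig Psi x₀ u) (Psi u / Sig u) u := by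
    intro u hu
    exact intervalIntegral.integral_hasDerivAt_right (hPS_int x₀ u le_rfl (le_of_lt hu))
      (ContinuousOn.stronglyMeasurableAtFilter isOpen_Ioi
        (hPS_cont.mono Ioi_subset_Ici_self) u hu)
      (hPS_cont.continuousAt (Ici_mem_nhds hu))
  have hQ0 : Qf Sig Psi x₀ x₀ = 0 := intervalIntegral.integral_same
  -- f continuity, nonneg
  have hf_cont : ContinuousOn f (Ici x₀) :=
    (continuousOn_const.div hScont hSne).mul
      ((Real.continuous_exp.comp_continuousOn hQcont.neg))
  have hf_nonneg : ∀ x ≥ x₀, 0 ≤ f x := fun x hx =>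
    mul_nonneg (div_nonneg zero_le_one (hSpos x hx).le) (Real.exp_nonneg _)
  -- φ splitting
  have hφ_split : ∀ u ≥ x₀, phif Sig Psi x₀ u = phif Sig Psi x₀ x₀ - ∫ x in x₀..u, f x := by
    intro u hu
    have hdisj : Disjoint (Ioc x₀ u) (Ioi u) := Ioc_disjoint_Ioi le_rfl
    have hunion : Ioc x₀ u ∪ Ioi u = Ioi x₀ := Ioc_union_Ioi_eq_Ioi hu
    have h1 : IntegrableOn f (Ioc x₀ u) volume := hφ.mono_set Ioc_subset_Ioi_self
    have h2 : IntegrableOn f (Ioi u) volume := hφ.mono_set (Ioi_subset_Ioi hu)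
    have h3 : ∫ x in Ioi x₀, f x = (∫ x in Ioc x₀ u, f x) + ∫ x in Ioi u, f x := by
      rw [← hunion]
      exact setIntegral_union hdisj measurableSet_Ioi h1 h2
    have h4 : phif Sig Psi x₀ u = ∫ x in Ioi u, f x := rfl
    have h5 : phif Sig Psi x₀ x₀ = ∫ x in Ioi x₀, f x := rfl
    rw [h4, h5, h3, intervalIntegral.integral_of_le hu]
    ring
  -- φ continuity on Ici x₀
  have hφcont : ContinuousOn (phif Sig Psi x₀) (Ici x₀) := by
    have hprim : ContinuousOn (fun u => phif Sig Psi x₀ x₀ - ∫ x in x₀..u, f x) (Ici x₀) :=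
      continuousOn_const.sub (primitive_contOn_Ici f x₀
        (fun b _ => hφ.mono_set Ioc_subset_Ioi_self))
    exact ContinuousOn.congr hprim hφ_split
  -- φ derivative
  have hφderiv : ∀ u ∈ Ioi x₀, HasDerivAt (phif Sig Psi x₀) (-(f u)) u := by
    intro u hu
    have hfi : IntervalIntegrable f volume x₀ u :=
      (intervalIntegrable_iff_integrableOn_Ioc_of_le (le_of_lt hu)).2
        (hφ.mono_set Ioc_subset_Ioi_self)
    have hd : HasDerivAt (fun v => phif Sig Psi x₀ x₀ - ∫ x in x₀..v, f x) (-(f u)) u := by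
      have := intervalIntegral.integral_hasDerivAt_right hfi
        (ContinuousOn.stronglyMeasurableAtFilter isOpen_Ioi
          (hf_cont.mono Ioi_subset_Ici_self) u hu)
        (hf_cont.continuousAt (Ici_mem_nhds hu))
      have h := (hasDerivAt_const u (phif Sig Psi x₀ x₀)).sub this
      rw [zero_sub] at h
      exact h
    apply hd.congr_of_eventuallyEq
    filter_upwards [Ioi_mem_nhds hu] with v hv
    exact hφ_split v (le_of_lt hv)
  -- g derivative
  have hgderiv : ∀ u ∈ Ioi x₀, HasDerivAt g ((Psi u * g u - 1) / Sig u) u := by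
    intro u hu
    have h1 := ((hQderiv u hu).exp).mul (hφderiv u hu)
    convert h1 using 1
    · rfl
    · rfl
    · rfl
    have hSu := hSne u (le_of_lt hu)
    simp only [hg_def, hf_def]
    rw [Real.exp_neg]
    field_simp
    ring
  -- φ, g nonneg
  have hφ_nonneg : ∀ u ≥ x₀, 0 ≤ phif Sig Psi x₀ u := by
    intro u hu
    apply setIntegral_nonneg measurableSet_Ioi
    intro x hx
    exact hf_nonneg x (le_trans hu (le_of_lt hx))
  have hg_nonneg : ∀ u ≥ x₀, 0 ≤ g u := fun u hu =>
    mul_nonneg (Real.exp_nonneg _) (hφ_nonneg u hu)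
  -- key: Psi u * g u ≤ 1
  have hkey : ∀ u ≥ x₀, Psi u * g u ≤ 1 := by
    intro u hu
    set G : ℝ → ℝ := fun x => -Real.exp (-(Qf Sig Psi x₀ x)) with hG_def
    set G' : ℝ → ℝ := fun x => (Psi x / Sig x) * Real.exp (-(Qf Sig Psi x₀ x)) with hG'_def
    have hGderiv : ∀ x ∈ Ioi u, HasDerivAt G (G' x) x := by
      intro x hx
      have hx' : x ∈ Ioi x₀ := lt_of_le_of_lt hu hx
      have := ((hQderiv x hx').neg.exp).neg
      convert this using 1
      · rfl
      · rfl
      · rfl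
      simp [hG'_def]
      ring
    have hGcont : ContinuousWithinAt G (Ici u) u := by
      have : ContinuousOn G (Ici x₀) :=
        ((Real.continuous_exp.comp_continuousOn hQcont.neg)).neg
      exact (this.mono (Ici_subset_Ici.2 hu)) u self_mem_Ici
    have hGtend : Tendsto G atTop (𝓝 0) := by
      have h1 : Tendsto (fun x => Real.exp (-(Qf Sig Psi x₀ x))) atTop (𝓝 0) :=
        Real.tendsto_exp_atBot.comp (tendsto_neg_atBot_iff.2 hQ)
      simpa [hG_def] using h1.neg
    have hG'nonneg : ∀ x ∈ Ioi u, 0 ≤ G' x := by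
      intro x hx
      have hx' : x₀ ≤ x := le_trans hu (le_of_lt hx)
      exact mul_nonneg (div_nonneg (hPpos x hx').le (hSpos x hx').le) (Real.exp_nonneg _)
    have hG'int : IntegrableOn G' (Ioi u) volume :=
      integrableOn_Ioi_deriv_of_nonneg hGcont hGderiv hG'nonneg hGtend
    have hG'val : ∫ x in Ioi u, G' x = Real.exp (-(Qf Sig Psi x₀ u)) := by
      rw [integral_Ioi_of_hasDerivAt_of_tendsto hGcont hGderiv hG'int hGtend]
      simp [hG_def]
    -- compare
    have hcomp : ∫ x in Ioi u, Psi u * f x ≤ ∫ x in Ioi u, G' x := by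
      apply setIntegral_mono_on ((hφ.mono_set (Ioi_subset_Ioi hu)).const_mul (Psi u))
        hG'int measurableSet_Ioi
      intro x hx
      have hx' : x₀ ≤ x := le_trans hu (le_of_lt hx)
      have hPle : Psi u ≤ Psi x := hPmono hu hx' (le_of_lt hx)
      have : Psi u * f x ≤ Psi x * f x :=
        mul_le_mul_of_nonneg_right hPle (hf_nonneg x hx')
      refine le_trans this (le_of_eq ?_)
      simp only [hf_def, hG'_def]
      ring
    have hμ : Psi u * phif Sig Psi x₀ u = ∫ x in Ioi u, Psi u * f x := by
      rw [MeasureTheory.integral_const_mul]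
      rfl
    have h2 : Psi u * phif Sig Psi x₀ u ≤ Real.exp (-(Qf Sig Psi x₀ u)) := by
      rw [hμ, ← hG'val]; exact hcomp
    have hexp : (0:ℝ) < Real.exp (Qf Sig Psi x₀ u) := Real.exp_pos _
    calc Psi u * g u = Real.exp (Qf Sig Psi x₀ u) * (Psi u * phif Sig Psi x₀ u) := by
          simp only [hg_def]; ring
      _ ≤ Real.exp (Qf Sig Psi x₀ u) * Real.exp (-(Qf Sig Psi x₀ u)) :=
          mul_le_mul_of_nonneg_left h2 hexp.le
      _ = 1 := by rw [← Real.exp_add]; simp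
  -- g continuity
  have hgcont : ContinuousOn g (Ici x₀) :=
    (Real.continuous_exp.comp_continuousOn hQcont).mul hφcont
  -- the integrand j
  set j : ℝ → ℝ := fun v => 1 / Psi v - (1 + C/c) * g v with hj_def
  have hjcont : ContinuousOn j (Ici x₀) :=
    (continuousOn_const.div hPcont hPne).sub (continuousOn_const.mul hgcont)
  have hj_int : ∀ a b, x₀ ≤ a → x₀ ≤ b → IntervalIntegrable j volume a b := by
    intro a b ha hb
    apply ContinuousOn.intervalIntegrable
    exact hjcont.mono (fun x hx => le_trans (le_min ha hb) hx.1)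
  -- K
  set K : ℝ → ℝ := fun x => (∫ v in x₀..x, j v) + (C/c) * (x * g x) with hK_def
  have hKcont : ContinuousOn K (Ici x₀) := by
    apply ContinuousOn.add
    · apply primitive_contOn_Ici
      intro b hb
      exact (intervalIntegrable_iff_integrableOn_Ioc_of_le hb).1 (hj_int x₀ b le_rfl hb)
    · exact continuousOn_const.mul (continuousOn_id.mul hgcont)
  set D : ℝ → ℝ := fun x => j x + (C/c) * (g x + x * ((Psi x * g x - 1) / Sig x)) with hD_def
  have hKderiv : ∀ x ∈ Ioi x₀, HasDerivAt K (D x) x := by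
    intro x hx
    have h1 : HasDerivAt (fun y => ∫ v in x₀..y, j v) (j x) x :=
      intervalIntegral.integral_hasDerivAt_right (hj_int x₀ x le_rfl (le_of_lt hx))
        (ContinuousOn.stronglyMeasurableAtFilter isOpen_Ioi
          (hjcont.mono Ioi_subset_Ici_self) x hx)
        (hjcont.continuousAt (Ici_mem_nhds hx))
    have h2 : HasDerivAt (fun y => y * g y) (1 * g x + x * ((Psi x * g x - 1) / Sig x)) x :=
      (hasDerivAt_id x).mul (hgderiv x hx)
    have h3 := h1.add ((h2.const_mul (C/c)))
    convert h3 using 1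
    · rfl
    · rfl
    · rfl
    simp [hD_def]
  have hDnonpos : ∀ x ∈ Ioi x₀, D x ≤ 0 := by
    intro x hx
    have hx' : x₀ ≤ x := le_of_lt hx
    have hxpos : (0:ℝ) < x := lt_of_lt_of_le hx₀ hx'
    have hP : 0 < Psi x := hPpos x hx'
    have hS : 0 < Sig x := hSpos x hx'
    have ht : 0 ≤ 1 - Psi x * g x := by linarith [hkey x hx']
    have hfrac : 1 / Psi x ≤ (C/c) * x / Sig x := by
      rw [div_le_div_iff₀ hP hS]
      have h1 : c * x ≤ Psi x := hlow x hx'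
      have h2 : Sig x ≤ C * x^2 := hupp x hx'
      have h3 : C / c * x * (c * x) = C * x^2 := by field_simp
      calc 1 * Sig x = Sig x := one_mul _
        _ ≤ C * x^2 := h2
        _ = C / c * x * (c * x) := h3.symm
        _ ≤ C / c * x * Psi x :=
            mul_le_mul_of_nonneg_left h1 (by positivity)
    have hDeq : D x = (1 - Psi x * g x) * (1 / Psi x) -
        (1 - Psi x * g x) * ((C/c) * x / Sig x) := by
      simp only [hD_def, hj_def]
      field_simp
      ring
    rw [hDeq]
    have := mul_le_mul_of_nonneg_left hfrac ht
    linarith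
  have hKanti : AntitoneOn K (Ici x₀) := by
    apply antitoneOn_of_deriv_nonpos (convex_Ici x₀) hKcont
    · intro x hx
      rw [interior_Ici] at hx
      exact (hKderiv x hx).differentiableAt.differentiableWithinAt
    · intro x hx
      rw [interior_Ici] at hx
      rw [(hKderiv x hx).deriv]
      exact hDnonpos x hx
  -- conclusion of part 1
  have hgg : ∀ y : ℝ, (∫ u in x₀..y, phif Sig Psi x₀ u * Real.exp (Qf Sig Psi x₀ u))
      = ∫ u in x₀..y, g u := by
    intro y
    apply intervalIntegral.integral_congr
    intro u _
    simp only [hg_def]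
    ring
  have hg_int : ∀ x ≥ x₀, IntervalIntegrable g volume x₀ x := by
    intro x hx
    apply ContinuousOn.intervalIntegrable
    exact hgcont.mono (fun y hy => le_trans (le_min le_rfl hx) hy.1)
  have hPinv_int : ∀ x ≥ x₀, IntervalIntegrable (fun v => 1 / Psi v) volume x₀ x := by
    intro x hx
    apply ContinuousOn.intervalIntegrable
    exact (continuousOn_const.div hPcont hPne).mono (fun y hy => le_trans (le_min le_rfl hx) hy.1)
  have hgx₀ : g x₀ = phif Sig Psi x₀ x₀ := by
    simp [hg_def, hQ0]
  have part1 : ∀ x ≥ x₀,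
      (1 + C/c) * ∫ u in x₀..x, phif Sig Psi x₀ u * Real.exp (Qf Sig Psi x₀ u)
        ≥ (∫ u in x₀..x, 1 / Psi u) - (C/c) * phif Sig Psi x₀ x₀ * x₀ := by
    intro x hx
    have hKle : K x ≤ K x₀ := hKanti self_mem_Ici hx hx
    have hK0 : K x₀ = (C/c) * (x₀ * phif Sig Psi x₀ x₀) := by
      simp [hK_def, hgx₀]
    have hjint : (∫ v in x₀..x, j v)
        = (∫ v in x₀..x, 1 / Psi v) - (1 + C/c) * ∫ v in x₀..x, g v := by
      simp only [hj_def]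
      rw [intervalIntegral.integral_sub (hPinv_int x hx)
        ((hg_int x hx).const_mul _), intervalIntegral.integral_const_mul]
    have hxg : 0 ≤ (C/c) * (x * g x) := by
      have : (0:ℝ) < x := lt_of_lt_of_le hx₀ hx
      have := hg_nonneg x hx
      positivity
    rw [ge_iff_le, hgg x]
    have hKx : K x = ((∫ v in x₀..x, 1 / Psi v) - (1 + C/c) * ∫ v in x₀..x, g v)
        + (C/c) * (x * g x) := by rw [hK_def]; simp only; rw [hjint]
    rw [hKx, hK0] at hKle
    linarith
  refine ⟨part1, ?_⟩
  -- part 2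
  intro Hin
  have Hing : IntegrableOn g (Ioi x₀) volume := by
    apply Hin.congr_fun _ measurableSet_Ioi
    intro u _
    simp only [hg_def]
    ring
  set I : ℝ := (1 + C/c) * (∫ u in Ioi x₀, g u) + (C/c) * phif Sig Psi x₀ x₀ * x₀ with hI_def
  apply MeasureTheory.integrableOn_Ioi_of_intervalIntegral_norm_bounded I x₀
    (l := atTop) (b := fun i : ℝ => i) ?_ tendsto_id
  · filter_upwards [eventually_ge_atTop x₀] with i hi
    have h1 : (∫ u in x₀..i, ‖1 / Psi u‖) = ∫ u in x₀..i, 1 / Psi u := by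
      rw [intervalIntegral.integral_of_le hi, intervalIntegral.integral_of_le hi]
      apply setIntegral_congr_fun measurableSet_Ioc
      intro u hu
      have : 0 < Psi u := hPpos u (le_of_lt hu.1)
      simp only [Real.norm_eq_abs]
      rw [abs_of_nonneg (by positivity)]
    rw [h1]
    have h2 := part1 i hi
    have h3 : (∫ u in x₀..i, g u) ≤ ∫ u in Ioi x₀, g u := by
      rw [intervalIntegral.integral_of_le hi]
      apply setIntegral_mono_set Hing
      · exact (ae_restrict_iff' measurableSet_Ioi).2
          (Filter.Eventually.of_forall (fun u hu => hg_nonneg u (le_of_lt hu)))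
      · exact HasSubset.Subset.eventuallyLE Ioc_subset_Ioi_self
    rw [hgg i] at h2
    have hcc : (0:ℝ) ≤ 1 + C/c := by positivity
    have h4 : (1 + C/c) * (∫ u in x₀..i, g u) ≤ (1 + C/c) * ∫ u in Ioi x₀, g u :=
      mul_le_mul_of_nonneg_left h3 hcc
    simp only [hI_def]
    linarith
  · intro i
    rcases le_or_gt i x₀ with h | h
    · rw [Set.Ioc_eq_empty (not_lt.2 h)]
      exact integrableOn_empty
    · exact (intervalIntegrable_iff_integrableOn_Ioc_of_le h.le).1 (hPinv_int i h.le)
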